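/- Let B_TM(ε) = ε Π_{n=0}^∞ (1 − (1−ε)^{2^n}) for ε ∈ (0,1). Then there is a constant c > 0 such that B_TM(ε) ≥ e^{−c (log ε)²} for all sufficiently small ε > 0. -/

import Mathlib

open Real

/-- `log (1 - x) ≥ -2x` for `0 ≤ x ≤ 1/2`. -/
lemma tm_log_one_sub_ge {x : ℝ} (h0 : 0 ≤ x) (h2 : x ≤ 1 / 2) :
    -(2 * x) ≤ Real.log (1 - x) := by
  have hx1 : (0:ℝ) < 1 - x := by linarith
  rw [Real.le_log_iff_exp_le hx1, Real.exp_neg]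
  have h1 : 1 + 2 * x ≤ Real.exp (2 * x) := by
    have := Real.add_one_le_exp (2 * x); linarith
  have hpos := Real.exp_pos (2 * x)
  have hy : 0 < (Real.exp (2 * x))⁻¹ := inv_pos.mpr hpos
  have hinv : (Real.exp (2 * x))⁻¹ * Real.exp (2 * x) = 1 := inv_mul_cancel₀ hpos.ne'
  nlinarith [mul_le_mul_of_nonneg_left h1 hy.le, sq_nonneg x]

/-- `exp (-1) ≤ 1/2`. -/
lemma tm_exp_neg_one_le : Real.exp (-1 : ℝ) ≤ 1 / 2 := by
  have h1 : (2:ℝ) ≤ Real.exp 1 := by have := Real.add_one_le_exp (1:ℝ); linarith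
  rw [Real.exp_neg]
  rw [inv_le_comm₀ (Real.exp_pos 1) (by norm_num)]
  linarith

/-- lower bound for the bias of the Thue–Morse ordering. -/
theorem thue_morse_bias_lower_bound :
    ∃ c : ℝ, 0 < c ∧ ∃ ε₀ : ℝ, 0 < ε₀ ∧ ∀ ε : ℝ, 0 < ε → ε < ε₀ →
      ε * ∏' n : ℕ, (1 - (1 - ε) ^ 2 ^ n) ≥ Real.exp (-c * (Real.log ε) ^ 2) := by
  refine ⟨4, by norm_num, Real.exp (-2), Real.exp_pos _, ?_⟩
  intro ε hε hεlt
  have hlogε : Real.log ε < -2 := by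
    have := Real.log_lt_log hε hεlt
    rwa [Real.log_exp] at this
  set L : ℝ := -Real.log ε with hLdef
  have hL : 2 < L := by simp only [hLdef]; linarith
  have hε1 : ε < 1 := by
    calc ε < Real.exp (-2) := hεlt
      _ < 1 := Real.exp_lt_one_iff.mpr (by norm_num)
  have hlog2 : 0 < Real.log 2 := Real.log_pos (by norm_num)
  set N : ℕ := ⌈L / Real.log 2⌉₊ with hNdef
  have hN1 : L / Real.log 2 ≤ (N : ℝ) := Nat.le_ceil _
  have hN2 : (N : ℝ) < L / Real.log 2 + 1 :=
    Nat.ceil_lt_add_one (by positivity)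
  -- `1 ≤ ε * 2 ^ N`
  have h2N : 1 ≤ ε * 2 ^ N := by
    have h2pow : (2:ℝ) ^ N = Real.exp ((N : ℝ) * Real.log 2) := by
      rw [Real.exp_nat_mul, Real.exp_log (by norm_num : (0:ℝ) < 2)]
    have hεe : ε = Real.exp (-L) := by
      simp only [hLdef, neg_neg]; rw [Real.exp_log hε]
    rw [h2pow, hεe, ← Real.exp_add]
    have : L ≤ (N : ℝ) * Real.log 2 := by
      rw [div_le_iff₀ hlog2] at hN1; linarith
    calc (1:ℝ) = Real.exp 0 := (Real.exp_zero).symm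
      _ ≤ Real.exp (-L + (N : ℝ) * Real.log 2) := Real.exp_le_exp.mpr (by linarith)
  set a : ℕ → ℝ := fun n => 1 - (1 - ε) ^ 2 ^ n with hadef
  have hx_pos : ∀ n : ℕ, 0 < (1 - ε) ^ 2 ^ n := fun n => pow_pos (by linarith) _
  have hx_lt1 : ∀ n : ℕ, (1 - ε) ^ 2 ^ n < 1 := fun n =>
    pow_lt_one₀ (by linarith) (by linarith) (Nat.two_pow_pos n).ne'
  have ha_pos : ∀ n, 0 < a n := fun n => by
    simp only [hadef]; linarith [hx_lt1 n]
  have ha_lt1 : ∀ n, a n < 1 := fun n => by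
    simp only [hadef]; linarith [hx_pos n]
  have ha_ge_eps : ∀ n, ε ≤ a n := by
    intro n
    have h1 : (1 - ε) ^ 2 ^ n ≤ (1 - ε) ^ 1 :=
      pow_le_pow_of_le_one (by linarith) (by linarith) (Nat.one_le_two_pow)
    simp only [hadef, pow_one] at *
    linarith
  -- tail bound
  have htail : ∀ k : ℕ, (1 - ε) ^ 2 ^ (N + k) ≤ Real.exp (-((k : ℝ) + 1)) := by
    intro k
    have h1 : (1 - ε) ≤ Real.exp (-ε) := by
      have := Real.add_one_le_exp (-ε); linarith
    calc (1 - ε) ^ 2 ^ (N + k) ≤ (Real.exp (-ε)) ^ 2 ^ (N + k) :=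
          pow_le_pow_left₀ (by linarith) h1 _
      _ = Real.exp (-(ε * (2:ℝ) ^ (N + k))) := by
          rw [← Real.exp_nat_mul]
          push_cast
          ring_nf
      _ ≤ Real.exp (-((k : ℝ) + 1)) := by
          apply Real.exp_le_exp.mpr
          apply neg_le_neg
          have hk2 : (k : ℝ) + 1 ≤ 2 ^ k := by
            have h := Nat.lt_two_pow_self (n := k)
            have h' : k + 1 ≤ 2 ^ k := h
            exact_mod_cast h'
          have : (2:ℝ) ^ (N + k) = 2 ^ N * 2 ^ k := pow_add 2 N k
          rw [this]
          have h2k : (0:ℝ) < 2 ^ k := by positivity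
          calc (k : ℝ) + 1 ≤ 2 ^ k := hk2
            _ = 1 * 2 ^ k := (one_mul _).symm
            _ ≤ (ε * 2 ^ N) * 2 ^ k := by
                apply mul_le_mul_of_nonneg_right h2N h2k.le
            _ = ε * (2 ^ N * 2 ^ k) := by ring
  have hx_half : ∀ k : ℕ, (1 - ε) ^ 2 ^ (N + k) ≤ 1 / 2 := by
    intro k
    calc (1 - ε) ^ 2 ^ (N + k) ≤ Real.exp (-((k : ℝ) + 1)) := htail k
      _ ≤ Real.exp (-1 : ℝ) := Real.exp_le_exp.mpr (by push_cast; linarith [Nat.cast_nonneg (α := ℝ) k])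
      _ ≤ 1 / 2 := tm_exp_neg_one_le
  -- the log tail bounds
  have hlogtail : ∀ k : ℕ,
      -(2 * Real.exp (-((k : ℝ) + 1))) ≤ Real.log (a (N + k)) := by
    intro k
    have h1 : -(2 * ((1 - ε) ^ 2 ^ (N + k))) ≤ Real.log (a (N + k)) := by
      simp only [hadef]
      exact tm_log_one_sub_ge (hx_pos _).le (hx_half k)
    calc -(2 * Real.exp (-((k : ℝ) + 1))) ≤ -(2 * ((1 - ε) ^ 2 ^ (N + k))) := by
          have := htail k; linarith
      _ ≤ Real.log (a (N + k)) := h1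
  have hlog_nonpos : ∀ n, Real.log (a n) ≤ 0 := fun n =>
    Real.log_nonpos (ha_pos n).le (ha_lt1 n).le
  -- conversion of exp(-(k+1)) to geometric
  have hconv : ∀ k : ℕ, Real.exp (-((k : ℝ) + 1)) = Real.exp (-1 : ℝ) ^ (k + 1) := by
    intro k
    rw [← Real.exp_nat_mul]
    push_cast
    ring_nf
  have hr0 : (0:ℝ) ≤ Real.exp (-1 : ℝ) := (Real.exp_pos _).le
  have hr1 : Real.exp (-1 : ℝ) < 1 := Real.exp_lt_one_iff.mpr (by norm_num)
  -- summability of the log series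
  have hgeosum : Summable (fun k : ℕ => 2 * Real.exp (-((k : ℝ) + 1))) := by
    have : Summable (fun k : ℕ => Real.exp (-1:ℝ) ^ k) := summable_geometric_of_lt_one hr0 hr1
    have h2 : Summable (fun k : ℕ => 2 * Real.exp (-1:ℝ) * Real.exp (-1:ℝ) ^ k) :=
      this.mul_left _
    refine h2.congr fun k => ?_
    rw [hconv k, pow_succ]
    ring
  have hSumTail : Summable (fun k : ℕ => Real.log (a (N + k))) := by
    apply Summable.of_norm_bounded hgeosum
    intro k
    rw [Real.norm_eq_abs, abs_of_nonpos (hlog_nonpos _)]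
    have := hlogtail k
    linarith
  have hSum : Summable (fun n : ℕ => Real.log (a n)) := by
    refine (summable_nat_add_iff N).mp (hSumTail.congr fun k => ?_)
    rw [Nat.add_comm]
  -- the comparison series ℓ
  set l : ℕ → ℝ := fun n => if n < N then Real.log ε
      else -(2 * Real.exp (-(((n : ℝ) - N) + 1))) with hldef
  have hltail : ∀ k : ℕ, l (k + N) = -(2 * Real.exp (-((k : ℝ) + 1))) := by
    intro k
    simp only [hldef]
    rw [if_neg (by omega)]
    push_cast
    ring_nf
  have hlSum : Summable l := by
    apply (summable_nat_add_iff N).mp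
    apply Summable.congr hgeosum.neg
    intro k
    rw [hltail k]
  have hle : ∀ n, l n ≤ Real.log (a n) := by
    intro n
    by_cases h : n < N
    · simp only [hldef, if_pos h]
      exact Real.log_le_log hε (ha_ge_eps n)
    · obtain ⟨k, rfl⟩ : ∃ k, n = N + k := ⟨n - N, by omega⟩
      have h1 := hlogtail k
      have h2 : l (N + k) = -(2 * Real.exp (-((k : ℝ) + 1))) := by
        rw [add_comm]; exact hltail k
      rw [h2]
      exact h1
  have htsum_le : ∑' n, l n ≤ ∑' n, Real.log (a n) := Summable.tsum_le_tsum hle hlSum hSum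
  -- compute a lower bound for the tsum of l
  have hlsplit : ∑ i ∈ Finset.range N, l i + ∑' k : ℕ, l (k + N) = ∑' n, l n :=
    Summable.sum_add_tsum_nat_add N hlSum
  have hhead : ∑ i ∈ Finset.range N, l i = (N : ℝ) * Real.log ε := by
    rw [Finset.sum_congr rfl (fun i hi => ?_), Finset.sum_const, Finset.card_range,
      nsmul_eq_mul]
    simp only [hldef]
    rw [if_pos (Finset.mem_range.mp hi)]
  have htailsum : -2 ≤ ∑' k : ℕ, l (k + N) := by
    have hcalc : ∑' k : ℕ, l (k + N) = -(2 * (Real.exp (-1:ℝ) * (1 - Real.exp (-1:ℝ))⁻¹)) := by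
      have h1 : ∀ k : ℕ, l (k + N) = -(2 * Real.exp (-1:ℝ)) * Real.exp (-1:ℝ) ^ k := by
        intro k
        rw [hltail k, hconv k, pow_succ]
        ring
      rw [tsum_congr h1, tsum_mul_left, tsum_geometric_of_lt_one hr0 hr1]
      ring
    rw [hcalc]
    have h1 : Real.exp (-1:ℝ) ≤ 1 / 2 := tm_exp_neg_one_le
    have h2 : (1:ℝ)/2 ≤ 1 - Real.exp (-1:ℝ) := by linarith
    have h3 : (1 - Real.exp (-1:ℝ))⁻¹ ≤ 2 := by
      rw [inv_le_comm₀ (by linarith) (by norm_num)]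
      linarith
    have h4 : (0:ℝ) < (1 - Real.exp (-1:ℝ))⁻¹ := by positivity
    nlinarith [Real.exp_pos (-1:ℝ)]
  have hltsum : (N : ℝ) * Real.log ε - 2 ≤ ∑' n, l n := by
    rw [← hlsplit, hhead]
    linarith
  -- identify the product with the exponential of the sum
  have hprod : HasProd a (Real.exp (∑' n, Real.log (a n))) := by
    have h := hSum.hasSum.rexp
    have heq : (Real.exp ∘ fun n => Real.log (a n)) = a := by
      funext n
      exact Real.exp_log (ha_pos n)
    rwa [heq] at h
  have htprod : ∏' n, a n = Real.exp (∑' n, Real.log (a n)) := hprod.tprod_eq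
  -- finish
  have hNle : (N : ℝ) ≤ 2 * L + 1 := by
    have hl2 : (1:ℝ)/2 < Real.log 2 := by
      have := Real.log_two_gt_d9; linarith
    have : L / Real.log 2 ≤ 2 * L := by
      rw [div_le_iff₀ hlog2]
      nlinarith
    linarith
  have hNlog : (2 * L + 1) * Real.log ε ≤ (N : ℝ) * Real.log ε :=
    mul_le_mul_of_nonpos_right hNle (by linarith)
  have hfinal : -4 * (Real.log ε) ^ 2 ≤ Real.log ε + ∑' n, Real.log (a n) := by
    have h1 : (N : ℝ) * Real.log ε - 2 ≤ ∑' n, Real.log (a n) := le_trans hltsum htsum_le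
    have hLsq : (Real.log ε) ^ 2 = L ^ 2 := by simp [hLdef]
    rw [hLsq]
    have hlogεL : Real.log ε = -L := by simp [hLdef]
    nlinarith [hL]
  rw [ge_iff_le]
  have : ε * ∏' n : ℕ, (1 - (1 - ε) ^ 2 ^ n) =
      Real.exp (Real.log ε + ∑' n, Real.log (a n)) := by
    rw [Real.exp_add, Real.exp_log hε]
    congr 1
  rw [this]
  apply Real.exp_le_exp.mpr
  linarith
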